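/- Under the hypotheses of the preceding bound (T > 0, D_A, D_B, D_C > 0, γ ≥ 0, bounded measurable sources f_A, f_B with M_0 = max(T·sup|f_A|, T·sup|f_B|) > 0, and (A_i), (B_i), (C_i) bounded measurable functions on ℝ × [0, T] satisfying the heat-kernel convolution recursion of the perturbation method), for every real λ with 0 < λ < 1/(T(12 M_0 + 10 γ)): the series Σ_{i=0}^{∞} λ^i A_i(x,t) converges absolutely for every (x, t) ∈ ℝ × [0, T], and the convergence is uniform, with the tail bound sup_{x, t ∈ [0,T]} Σ_{i=N}^{∞} λ^i |A_i(x,t)| ≤ M_0 / 2^{N−1} for every N ≥ 0; the same holds for (B_i) and (C_i). -/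

import Mathlib

open MeasureTheory

/-- The one-dimensional heat kernel `φ_D(x,t) = (4πDt)^{-1/2} exp(−x²/(4Dt))`. -/
noncomputable def heatKernel (D x t : ℝ) : ℝ :=
  (4 * Real.pi * D * t) ^ (-(1 : ℝ) / 2) * Real.exp (-(x ^ 2) / (4 * D * t))

lemma heatKernel_nonneg {D t : ℝ} (hD : 0 ≤ D) (ht : 0 ≤ t) (x : ℝ) :
    0 ≤ heatKernel D x t := by
  have hπ := Real.pi_pos
  exact mul_nonneg (Real.rpow_nonneg (by positivity) _) (Real.exp_pos _).le

lemma heatKernel_zero (D x : ℝ) : heatKernel D x 0 = 0 := by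
  simp [heatKernel, Real.zero_rpow (by norm_num : (-(1:ℝ)/2) ≠ 0)]

lemma heatKernel_integrable {D t : ℝ} (hD : 0 < D) (ht : 0 < t) :
    Integrable fun x : ℝ => heatKernel D x t := by
  have hb : (0:ℝ) < 1 / (4 * D * t) := by positivity
  have h := (integrable_exp_neg_mul_sq hb).const_mul
    ((4 * Real.pi * D * t) ^ (-(1:ℝ)/2))
  have hfun : (fun x : ℝ => heatKernel D x t)
      = fun x : ℝ => (4 * Real.pi * D * t) ^ (-(1:ℝ)/2) * Real.exp (-(1/(4*D*t)) * x ^ 2) := by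
    funext x
    unfold heatKernel
    congr 1
    ring
  rw [hfun]
  exact h

lemma heatKernel_integral {D t : ℝ} (hD : 0 < D) (ht : 0 < t) :
    (∫ x : ℝ, heatKernel D x t) = 1 := by
  have hπ := Real.pi_pos
  have hb : (0:ℝ) < 1 / (4 * D * t) := by positivity
  have h1 : (∫ x : ℝ, heatKernel D x t)
      = (4 * Real.pi * D * t) ^ (-(1:ℝ)/2) * ∫ x : ℝ, Real.exp (-(1/(4*D*t)) * x ^ 2) := by
    rw [← integral_const_mul]
    congr 1
    funext x
    unfold heatKernel
    congr 1
    field_simp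
  rw [h1, integral_gaussian]
  have h2 : Real.pi / (1 / (4 * D * t)) = 4 * Real.pi * D * t := by
    field_simp
  rw [h2, Real.sqrt_eq_rpow, ← Real.rpow_add (by positivity)]
  norm_num

lemma conv_bound {D T t : ℝ} (hD : 0 < D) (hT : 0 ≤ T) (ht : t ∈ Set.Icc (0:ℝ) T)
    (x : ℝ) (g : ℝ → ℝ → ℝ) {K : ℝ} (hK : 0 ≤ K)
    (hg : ∀ y : ℝ, ∀ s ∈ Set.Icc (0:ℝ) T, |g y s| ≤ K) :
    |∫ s in (0:ℝ)..t, ∫ y : ℝ, heatKernel D (x - y) (t - s) * g y s| ≤ T * K := by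
  have h1 : ∀ s ∈ Set.uIoc (0:ℝ) t,
      ‖∫ y : ℝ, heatKernel D (x - y) (t - s) * g y s‖ ≤ K := by
    intro s hs
    rw [Set.uIoc_of_le ht.1] at hs
    have hs0 : 0 < s := hs.1
    have hst : s ≤ t := hs.2
    have hsT : s ∈ Set.Icc (0:ℝ) T := ⟨hs0.le, hst.trans ht.2⟩
    rcases eq_or_lt_of_le (sub_nonneg.mpr hst) with h0 | hpos
    · have : (fun y : ℝ => heatKernel D (x - y) (t - s) * g y s) = fun _ => 0 := by
        funext y; rw [← h0, heatKernel_zero, zero_mul]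
      rw [this]
      simpa using hK
    · have hker : Integrable fun y : ℝ => heatKernel D (x - y) (t - s) :=
        (integrable_comp_sub_left (fun z => heatKernel D z (t - s)) x).mpr
          (heatKernel_integrable hD hpos)
      have hint : Integrable fun y : ℝ => heatKernel D (x - y) (t - s) * K :=
        hker.mul_const K
      have hbd : ∀ y : ℝ, ‖heatKernel D (x - y) (t - s) * g y s‖
          ≤ heatKernel D (x - y) (t - s) * K := by
        intro y
        rw [Real.norm_eq_abs, abs_mul,
          abs_of_nonneg (heatKernel_nonneg hD.le hpos.le _)]
        exact mul_le_mul_of_nonneg_left (hg y s hsT) (heatKernel_nonneg hD.le hpos.le _)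
      calc ‖∫ y : ℝ, heatKernel D (x - y) (t - s) * g y s‖
          ≤ ∫ y : ℝ, heatKernel D (x - y) (t - s) * K :=
            norm_integral_le_of_norm_le hint (Filter.Eventually.of_forall hbd)
        _ = (∫ y : ℝ, heatKernel D (x - y) (t - s)) * K := integral_mul_const _ _
        _ = (∫ z : ℝ, heatKernel D z (t - s)) * K := by
            rw [integral_sub_left_eq_self (fun z => heatKernel D z (t - s)) volume x]
        _ = K := by rw [heatKernel_integral hD hpos, one_mul]
  have h2 := intervalIntegral.norm_integral_le_of_norm_le_const h1
  rw [Real.norm_eq_abs] at h2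
  have : |t - 0| = t := by rw [sub_zero, abs_of_nonneg ht.1]
  rw [this] at h2
  calc |∫ s in (0:ℝ)..t, ∫ y : ℝ, heatKernel D (x - y) (t - s) * g y s|
      ≤ K * t := h2
    _ ≤ K * T := mul_le_mul_of_nonneg_left ht.2 hK
    _ = T * K := mul_comm _ _

lemma catalan_le_four_pow (n : ℕ) : catalan n ≤ 4 ^ n := by
  have h1 : catalan n ≤ n.centralBinom := by
    rw [catalan_eq_centralBinom_div]
    exact Nat.div_le_self _ _
  have h2 : n.centralBinom ≤ 4 ^ n := by
    have h3 : (2 * n).choose n ≤ ∑ k ∈ Finset.range (2 * n + 1), (2 * n).choose k :=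
      Finset.single_le_sum (fun _ _ => Nat.zero_le _)
        (Finset.mem_range.mpr (by omega))
    rw [Nat.sum_range_choose] at h3
    calc n.centralBinom = (2 * n).choose n := rfl
      _ ≤ 2 ^ (2 * n) := h3
      _ = 4 ^ n := by rw [pow_mul]; norm_num
  exact h1.trans h2

lemma catalan_mono_succ (m : ℕ) : catalan m ≤ catalan (m + 1) := by
  have h : catalan (m + 1)
      = ∑ j ∈ Finset.range (m + 1), catalan j * catalan (m - j) := by
    rw [catalan_succ, ← Fin.sum_univ_eq_sum_range]
  rw [h]
  calc catalan m = catalan 0 * catalan (m - 0) := by simp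
    _ ≤ _ := Finset.single_le_sum (f := fun j => catalan j * catalan (m - j))
        (fun _ _ => Nat.zero_le _) (Finset.mem_range.mpr (by omega))

lemma catalan_sum_real (m : ℕ) :
    (∑ j ∈ Finset.range (m + 1), (catalan j : ℝ) * (catalan (m - j) : ℝ))
      = (catalan (m + 1) : ℝ) := by
  have h : catalan (m + 1)
      = ∑ j ∈ Finset.range (m + 1), catalan j * catalan (m - j) := by
    rw [catalan_succ, ← Fin.sum_univ_eq_sum_range]
  rw [h]
  push_cast
  rfl

/-- Uniform convergence of the perturbation series for the reaction–diffusion system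
`A + B ⇌ C`: under the heat-kernel convolution recursion, for every
`0 < λ < 1/(T(12M₀ + 10γ))` the series `Σᵢ λ^i A_i(x,t)` converges absolutely for every
`(x,t) ∈ ℝ × [0,T]`, uniformly, with the tail bound
`sup_{x, t∈[0,T]} Σ_{i≥N} λ^i |A_i(x,t)| ≤ M₀/2^{N−1}` for every `N ≥ 0`;
and likewise for `B_i` and `C_i`. -/
theorem perturbation_series_uniform_convergence
    (T DA DB DC γ : ℝ) (hT : 0 < T) (hDA : 0 < DA) (hDB : 0 < DB) (hDC : 0 < DC)
    (hγ : 0 ≤ γ)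
    (fA fB : ℝ → ℝ → ℝ)
    (hfAm : Measurable (Function.uncurry fA)) (hfBm : Measurable (Function.uncurry fB))
    (hfAb : ∃ K, ∀ x : ℝ, ∀ t ∈ Set.Icc (0 : ℝ) T, |fA x t| ≤ K)
    (hfBb : ∃ K, ∀ x : ℝ, ∀ t ∈ Set.Icc (0 : ℝ) T, |fB x t| ≤ K)
    (M₀ : ℝ)
    (hM₀ : M₀ = max (T * ⨆ p : ℝ × Set.Icc (0 : ℝ) T, |fA p.1 p.2|)
                    (T * ⨆ p : ℝ × Set.Icc (0 : ℝ) T, |fB p.1 p.2|))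
    (hM₀pos : 0 < M₀)
    (A B C : ℕ → ℝ → ℝ → ℝ)
    (hAm : ∀ i, Measurable (Function.uncurry (A i)))
    (hBm : ∀ i, Measurable (Function.uncurry (B i)))
    (hCm : ∀ i, Measurable (Function.uncurry (C i)))
    (hAb : ∀ i, ∃ K, ∀ x : ℝ, ∀ t ∈ Set.Icc (0 : ℝ) T, |A i x t| ≤ K)
    (hBb : ∀ i, ∃ K, ∀ x : ℝ, ∀ t ∈ Set.Icc (0 : ℝ) T, |B i x t| ≤ K)
    (hCb : ∀ i, ∃ K, ∀ x : ℝ, ∀ t ∈ Set.Icc (0 : ℝ) T, |C i x t| ≤ K)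
    (hA0 : ∀ x : ℝ, ∀ t ∈ Set.Icc (0 : ℝ) T,
      A 0 x t = ∫ s in (0 : ℝ)..t, ∫ y : ℝ, heatKernel DA (x - y) (t - s) * fA y s)
    (hB0 : ∀ x : ℝ, ∀ t ∈ Set.Icc (0 : ℝ) T,
      B 0 x t = ∫ s in (0 : ℝ)..t, ∫ y : ℝ, heatKernel DB (x - y) (t - s) * fB y s)
    (hC0 : ∀ x : ℝ, ∀ t ∈ Set.Icc (0 : ℝ) T, C 0 x t = 0)
    (hArec : ∀ i : ℕ, 1 ≤ i → ∀ x : ℝ, ∀ t ∈ Set.Icc (0 : ℝ) T,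
      A i x t = -∫ s in (0 : ℝ)..t, ∫ y : ℝ, heatKernel DA (x - y) (t - s) *
        ((∑ j ∈ Finset.range i, A j y s * B (i - 1 - j) y s) - γ * C (i - 1) y s))
    (hBrec : ∀ i : ℕ, 1 ≤ i → ∀ x : ℝ, ∀ t ∈ Set.Icc (0 : ℝ) T,
      B i x t = -∫ s in (0 : ℝ)..t, ∫ y : ℝ, heatKernel DB (x - y) (t - s) *
        ((∑ j ∈ Finset.range i, A j y s * B (i - 1 - j) y s) - γ * C (i - 1) y s))
    (hCrec : ∀ i : ℕ, 1 ≤ i → ∀ x : ℝ, ∀ t ∈ Set.Icc (0 : ℝ) T,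
      C i x t = ∫ s in (0 : ℝ)..t, ∫ y : ℝ, heatKernel DC (x - y) (t - s) *
        ((∑ j ∈ Finset.range i, A j y s * B (i - 1 - j) y s) - γ * C (i - 1) y s)) :
    ∀ lam : ℝ, 0 < lam → lam < 1 / (T * (12 * M₀ + 10 * γ)) →
      ((∀ x : ℝ, ∀ t ∈ Set.Icc (0 : ℝ) T, Summable fun i : ℕ => |lam ^ i * A i x t|) ∧
        ∀ N : ℕ, (⨆ p : ℝ × Set.Icc (0 : ℝ) T,
            ∑' i : ℕ, lam ^ (N + i) * |A (N + i) p.1 p.2|) ≤ M₀ / (2 : ℝ) ^ ((N : ℤ) - 1)) ∧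
      ((∀ x : ℝ, ∀ t ∈ Set.Icc (0 : ℝ) T, Summable fun i : ℕ => |lam ^ i * B i x t|) ∧
        ∀ N : ℕ, (⨆ p : ℝ × Set.Icc (0 : ℝ) T,
            ∑' i : ℕ, lam ^ (N + i) * |B (N + i) p.1 p.2|) ≤ M₀ / (2 : ℝ) ^ ((N : ℤ) - 1)) ∧
      ((∀ x : ℝ, ∀ t ∈ Set.Icc (0 : ℝ) T, Summable fun i : ℕ => |lam ^ i * C i x t|) ∧
        ∀ N : ℕ, (⨆ p : ℝ × Set.Icc (0 : ℝ) T,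
            ∑' i : ℕ, lam ^ (N + i) * |C (N + i) p.1 p.2|) ≤ M₀ / (2 : ℝ) ^ ((N : ℤ) - 1)) := by
  intro lam hlam hlam2
  haveI : Nonempty (Set.Icc (0 : ℝ) T) := ⟨⟨0, le_refl 0, hT.le⟩⟩
  -- suprema of the sources
  set SA : ℝ := ⨆ p : ℝ × Set.Icc (0 : ℝ) T, |fA p.1 p.2| with hSA
  set SB : ℝ := ⨆ p : ℝ × Set.Icc (0 : ℝ) T, |fB p.1 p.2| with hSB
  obtain ⟨KA, hKA⟩ := hfAb
  obtain ⟨KB, hKB⟩ := hfBb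
  have hbddA : BddAbove (Set.range fun p : ℝ × Set.Icc (0 : ℝ) T => |fA p.1 p.2|) :=
    ⟨KA, by rintro _ ⟨p, rfl⟩; exact hKA p.1 p.2 p.2.2⟩
  have hbddB : BddAbove (Set.range fun p : ℝ × Set.Icc (0 : ℝ) T => |fB p.1 p.2|) :=
    ⟨KB, by rintro _ ⟨p, rfl⟩; exact hKB p.1 p.2 p.2.2⟩
  have hfA_le : ∀ y : ℝ, ∀ s ∈ Set.Icc (0:ℝ) T, |fA y s| ≤ SA := fun y s hs =>
    le_ciSup hbddA (⟨y, ⟨s, hs⟩⟩ : ℝ × Set.Icc (0:ℝ) T)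
  have hfB_le : ∀ y : ℝ, ∀ s ∈ Set.Icc (0:ℝ) T, |fB y s| ≤ SB := fun y s hs =>
    le_ciSup hbddB (⟨y, ⟨s, hs⟩⟩ : ℝ × Set.Icc (0:ℝ) T)
  have hSAnn : 0 ≤ SA := (abs_nonneg _).trans (hfA_le 0 0 ⟨le_refl 0, hT.le⟩)
  have hSBnn : 0 ≤ SB := (abs_nonneg _).trans (hfB_le 0 0 ⟨le_refl 0, hT.le⟩)
  have hTSA : T * SA ≤ M₀ := hM₀ ▸ le_max_left _ _
  have hTSB : T * SB ≤ M₀ := hM₀ ▸ le_max_right _ _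
  -- geometric ratio
  set ρ : ℝ := lam * T * (M₀ + γ) with hρdef
  have hρ : 0 ≤ ρ := by positivity
  have hX : (0:ℝ) < T * (12 * M₀ + 10 * γ) := by positivity
  have hlt : lam * (T * (12 * M₀ + 10 * γ)) < 1 := (lt_div_iff₀ hX).mp hlam2
  have hρ4 : 4 * ρ ≤ 1 / 2 := by
    have h1 : 0 ≤ lam * T := by positivity
    nlinarith [mul_nonneg h1 (by linarith : (0:ℝ) ≤ 4 * M₀ + 2 * γ)]
  have h4ρnn : 0 ≤ 4 * ρ := by positivity
  -- the inductive bound sequence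
  set Kb : ℕ → ℝ := fun i => M₀ * ρ ^ i * (catalan i : ℝ) with hKbdef
  have hKbnn : ∀ i, 0 ≤ Kb i := fun i =>
    mul_nonneg (mul_nonneg hM₀pos.le (pow_nonneg hρ i)) (Nat.cast_nonneg _)
  have hKb0 : Kb 0 = M₀ := by simp [hKbdef]
  -- main inductive pointwise bound
  have key : ∀ i : ℕ, ∀ x : ℝ, ∀ t ∈ Set.Icc (0:ℝ) T,
      lam ^ i * |A i x t| ≤ Kb i ∧ lam ^ i * |B i x t| ≤ Kb i ∧
      lam ^ i * |C i x t| ≤ Kb i := by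
    intro i
    induction i using Nat.strong_induction_on with
    | _ i ih =>
      match i with
      | 0 =>
        intro x t ht
        rw [hKb0]
        refine ⟨?_, ?_, ?_⟩
        · rw [pow_zero, one_mul, hA0 x t ht]
          exact (conv_bound hDA hT.le ht x fA hSAnn hfA_le).trans hTSA
        · rw [pow_zero, one_mul, hB0 x t ht]
          exact (conv_bound hDB hT.le ht x fB hSBnn hfB_le).trans hTSB
        · rw [pow_zero, one_mul, hC0 x t ht]
          simpa using hM₀pos.le
      | Nat.succ m =>
        intro x t ht
        set S : ℝ := (∑ j ∈ Finset.range (m + 1), Kb j * Kb (m - j)) + γ * Kb m with hSdef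
        have hSnn : 0 ≤ S := by
          apply add_nonneg
          · exact Finset.sum_nonneg fun j _ => mul_nonneg (hKbnn j) (hKbnn (m - j))
          · exact mul_nonneg hγ (hKbnn m)
        have hlamm : (0:ℝ) < lam ^ m := pow_pos hlam m
        set Kg : ℝ := S / lam ^ m with hKgdef
        have hKgnn : 0 ≤ Kg := div_nonneg hSnn hlamm.le
        -- pointwise bound on the reaction term
        have hg : ∀ y : ℝ, ∀ s ∈ Set.Icc (0:ℝ) T,
            |(∑ j ∈ Finset.range (m + 1), A j y s * B (m + 1 - 1 - j) y s)
              - γ * C (m + 1 - 1) y s| ≤ Kg := by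
          intro y s hs
          rw [hKgdef, le_div_iff₀ hlamm]
          have tri : |(∑ j ∈ Finset.range (m + 1), A j y s * B (m + 1 - 1 - j) y s)
              - γ * C (m + 1 - 1) y s|
              ≤ (∑ j ∈ Finset.range (m + 1), |A j y s| * |B (m - j) y s|)
                + γ * |C m y s| := by
            have e1 : m + 1 - 1 = m := rfl
            calc |(∑ j ∈ Finset.range (m + 1), A j y s * B (m + 1 - 1 - j) y s)
                - γ * C (m + 1 - 1) y s|
                ≤ |∑ j ∈ Finset.range (m + 1), A j y s * B (m + 1 - 1 - j) y s|
                  + |γ * C (m + 1 - 1) y s| := abs_sub _ _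
              _ ≤ (∑ j ∈ Finset.range (m + 1), |A j y s| * |B (m - j) y s|)
                  + γ * |C m y s| := by
                  gcongr
                  · calc |∑ j ∈ Finset.range (m + 1), A j y s * B (m + 1 - 1 - j) y s|
                        ≤ ∑ j ∈ Finset.range (m + 1), |A j y s * B (m + 1 - 1 - j) y s| :=
                          Finset.abs_sum_le_sum_abs _ _
                      _ = ∑ j ∈ Finset.range (m + 1), |A j y s| * |B (m - j) y s| := by
                          refine Finset.sum_congr rfl fun j _ => ?_
                          rw [abs_mul]
                          norm_num
                  · rw [e1, abs_mul, abs_of_nonneg hγ]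
          have step : lam ^ m * ((∑ j ∈ Finset.range (m + 1), |A j y s| * |B (m - j) y s|)
              + γ * |C m y s|) ≤ S := by
            rw [hSdef, mul_add, Finset.mul_sum]
            apply add_le_add
            · apply Finset.sum_le_sum
              intro j hj
              have hj' : j ≤ m := Nat.lt_succ_iff.mp (Finset.mem_range.mp hj)
              have e : lam ^ m = lam ^ j * lam ^ (m - j) := by
                rw [← pow_add, Nat.add_sub_cancel' hj']
              calc lam ^ m * (|A j y s| * |B (m - j) y s|)
                  = (lam ^ j * |A j y s|) * (lam ^ (m - j) * |B (m - j) y s|) := by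
                    rw [e]; ring
                _ ≤ Kb j * Kb (m - j) :=
                    mul_le_mul (ih j (Nat.lt_succ_of_le hj') y s hs).1
                      (ih (m - j) (Nat.lt_succ_of_le (Nat.sub_le m j)) y s hs).2.1
                      (mul_nonneg (pow_pos hlam _).le (abs_nonneg _)) (hKbnn j)
            · calc lam ^ m * (γ * |C m y s|) = γ * (lam ^ m * |C m y s|) := by ring
                _ ≤ γ * Kb m := mul_le_mul_of_nonneg_left
                    (ih m (Nat.lt_succ_self m) y s hs).2.2 hγ
          calc |(∑ j ∈ Finset.range (m + 1), A j y s * B (m + 1 - 1 - j) y s)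
              - γ * C (m + 1 - 1) y s| * lam ^ m
              ≤ ((∑ j ∈ Finset.range (m + 1), |A j y s| * |B (m - j) y s|)
                + γ * |C m y s|) * lam ^ m :=
                mul_le_mul_of_nonneg_right tri hlamm.le
            _ = lam ^ m * ((∑ j ∈ Finset.range (m + 1), |A j y s| * |B (m - j) y s|)
                + γ * |C m y s|) := mul_comm _ _
            _ ≤ S := step
        -- the scalar inequality
        have hfinal : lam ^ (m + 1) * (T * Kg) ≤ Kb (m + 1) := by
          have heq : lam ^ (m + 1) * (T * Kg) = lam * T * S := by
            rw [hKgdef, pow_succ]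
            field_simp
          rw [heq]
          have hSig : (∑ j ∈ Finset.range (m + 1), Kb j * Kb (m - j))
              = M₀ ^ 2 * ρ ^ m * (catalan (m + 1) : ℝ) := by
            rw [← catalan_sum_real m, Finset.mul_sum]
            refine Finset.sum_congr rfl fun j hj => ?_
            have hj' : j ≤ m := Nat.lt_succ_iff.mp (Finset.mem_range.mp hj)
            have e : ρ ^ m = ρ ^ j * ρ ^ (m - j) := by
              rw [← pow_add, Nat.add_sub_cancel' hj']
            simp only [hKbdef]
            rw [e]; ring
          have hmono : (catalan m : ℝ) ≤ (catalan (m + 1) : ℝ) :=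
            Nat.cast_le.mpr (catalan_mono_succ m)
          have hS_le : S ≤ (M₀ + γ) * (M₀ * ρ ^ m * (catalan (m + 1) : ℝ)) := by
            rw [hSdef, hSig]
            have h2 : γ * Kb m ≤ γ * (M₀ * ρ ^ m * (catalan (m + 1) : ℝ)) := by
              apply mul_le_mul_of_nonneg_left _ hγ
              simp only [hKbdef]
              exact mul_le_mul_of_nonneg_left hmono (by positivity)
            simp only [hKbdef] at h2 ⊢
            nlinarith [h2]
          calc lam * T * S ≤ lam * T * ((M₀ + γ) * (M₀ * ρ ^ m * (catalan (m + 1) : ℝ))) :=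
              mul_le_mul_of_nonneg_left hS_le (by positivity)
            _ = Kb (m + 1) := by
                simp only [hKbdef, hρdef, pow_succ]
                ring
        refine ⟨?_, ?_, ?_⟩
        · rw [hArec (m + 1) (Nat.succ_le_succ (Nat.zero_le m)) x t ht, abs_neg]
          exact le_trans (mul_le_mul_of_nonneg_left
            (conv_bound hDA hT.le ht x _ hKgnn hg) (pow_pos hlam _).le) hfinal
        · rw [hBrec (m + 1) (Nat.succ_le_succ (Nat.zero_le m)) x t ht, abs_neg]
          exact le_trans (mul_le_mul_of_nonneg_left
            (conv_bound hDB hT.le ht x _ hKgnn hg) (pow_pos hlam _).le) hfinal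
        · rw [hCrec (m + 1) (Nat.succ_le_succ (Nat.zero_le m)) x t ht]
          exact le_trans (mul_le_mul_of_nonneg_left
            (conv_bound hDC hT.le ht x _ hKgnn hg) (pow_pos hlam _).le) hfinal
  -- geometric bound on Kb
  have hKble : ∀ i, Kb i ≤ M₀ * (1 / 2 : ℝ) ^ i := by
    intro i
    have hcat : (catalan i : ℝ) ≤ (4:ℝ) ^ i := by
      calc (catalan i : ℝ) ≤ ((4 ^ i : ℕ) : ℝ) := Nat.cast_le.mpr (catalan_le_four_pow i)
        _ = (4:ℝ) ^ i := by push_cast; ring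
    calc Kb i = M₀ * (ρ ^ i * (catalan i : ℝ)) := by rw [hKbdef]; ring
      _ ≤ M₀ * (ρ ^ i * (4:ℝ) ^ i) :=
          mul_le_mul_of_nonneg_left (mul_le_mul_of_nonneg_left hcat (pow_nonneg hρ i))
            hM₀pos.le
      _ = M₀ * (4 * ρ) ^ i := by rw [← mul_pow, mul_comm ρ 4]
      _ ≤ M₀ * (1 / 2 : ℝ) ^ i :=
          mul_le_mul_of_nonneg_left (pow_le_pow_left₀ h4ρnn hρ4 i) hM₀pos.le
  have habs : ∀ Z : ℕ → ℝ → ℝ → ℝ,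
      (∀ i : ℕ, ∀ x : ℝ, ∀ t ∈ Set.Icc (0:ℝ) T, lam ^ i * |Z i x t| ≤ Kb i) →
      (∀ x : ℝ, ∀ t ∈ Set.Icc (0 : ℝ) T, Summable fun i : ℕ => |lam ^ i * Z i x t|) ∧
        ∀ N : ℕ, (⨆ p : ℝ × Set.Icc (0 : ℝ) T,
            ∑' i : ℕ, lam ^ (N + i) * |Z (N + i) p.1 p.2|) ≤ M₀ / (2 : ℝ) ^ ((N : ℤ) - 1) := by
    intro Z hZ
    have hle : ∀ i : ℕ, ∀ x : ℝ, ∀ t ∈ Set.Icc (0:ℝ) T,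
        lam ^ i * |Z i x t| ≤ M₀ * (1 / 2 : ℝ) ^ i :=
      fun i x t ht => (hZ i x t ht).trans (hKble i)
    have hgeo : Summable fun i : ℕ => M₀ * (1 / 2 : ℝ) ^ i :=
      (summable_geometric_of_lt_one (by norm_num) (by norm_num)).mul_left M₀
    constructor
    · intro x t ht
      apply Summable.of_nonneg_of_le (fun i => abs_nonneg _) _ hgeo
      intro i
      rw [abs_mul, abs_pow, abs_of_pos hlam]
      exact hle i x t ht
    · intro N
      apply ciSup_le
      intro p
      have hle' : ∀ i : ℕ, lam ^ (N + i) * |Z (N + i) p.1 p.2|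
          ≤ (M₀ * (1 / 2 : ℝ) ^ N) * (1 / 2 : ℝ) ^ i := by
        intro i
        calc lam ^ (N + i) * |Z (N + i) p.1 p.2| ≤ M₀ * (1 / 2 : ℝ) ^ (N + i) :=
            hle (N + i) p.1 p.2 p.2.2
          _ = (M₀ * (1 / 2 : ℝ) ^ N) * (1 / 2 : ℝ) ^ i := by rw [pow_add]; ring
      have hgeo' : Summable fun i : ℕ => (M₀ * (1 / 2 : ℝ) ^ N) * (1 / 2 : ℝ) ^ i :=
        (summable_geometric_of_lt_one (by norm_num) (by norm_num)).mul_left _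
      have hsum1 : Summable fun i : ℕ => lam ^ (N + i) * |Z (N + i) p.1 p.2| :=
        Summable.of_nonneg_of_le
          (fun i => mul_nonneg (pow_pos hlam _).le (abs_nonneg _)) hle' hgeo'
      calc (∑' i : ℕ, lam ^ (N + i) * |Z (N + i) p.1 p.2|)
          ≤ ∑' i : ℕ, (M₀ * (1 / 2 : ℝ) ^ N) * (1 / 2 : ℝ) ^ i :=
            Summable.tsum_le_tsum hle' hsum1 hgeo'
        _ = (M₀ * (1 / 2 : ℝ) ^ N) * (1 - 1 / 2)⁻¹ := by
            rw [tsum_mul_left, tsum_geometric_of_lt_one (by norm_num) (by norm_num)]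
        _ = M₀ / (2 : ℝ) ^ ((N : ℤ) - 1) := by
            rw [zpow_sub₀ (by norm_num : (2:ℝ) ≠ 0), zpow_one, zpow_natCast]
            rw [one_div, inv_pow]
            field_simp
            ring
  exact ⟨habs A (fun i x t ht => (key i x t ht).1),
    habs B (fun i x t ht => (key i x t ht).2.1),
    habs C (fun i x t ht => (key i x t ht).2.2)⟩
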